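/- arXiv:math/0601186 — 2 statements merged into one kernel-verified Lean document; each statement's English description precedes it below -/
import Mathlib

section
/- Let m \u2265 1, and let p_1,\u2026,p_m, q_1,\u2026,q_m be indeterminates. Set r_i = p_1 + \u22ef + p_i (with r_0 = 0). Then the following identity of rational functions (equivalently, formal power series) in z holds: [(1 - r_m z) \u00b7 \u220f_{i=1}^m (1 - (q_i + r_{i-1}) z)] / [\u220f_{i=1}^m (1 - (q_i + r_i) z)] = \u220f_{i=1}^m [1 + p_i q_i z\u00b2 / ((1 - r_{i-1} z)(1 - (q_i + r_i) z))]. -/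
/-- The field of rational functions `ℚ(p_1,…,p_m,q_1,…,q_m,z)`. -/
abbrev RatField (m : ℕ) : Type := FractionRing (MvPolynomial (Fin m ⊕ Fin m ⊕ Unit) ℚ)

noncomputable def pvar {m : ℕ} (i : Fin m) : RatField m :=
  algebraMap (MvPolynomial (Fin m ⊕ Fin m ⊕ Unit) ℚ) _ (MvPolynomial.X (Sum.inl i))

noncomputable def qvar {m : ℕ} (i : Fin m) : RatField m :=
  algebraMap (MvPolynomial (Fin m ⊕ Fin m ⊕ Unit) ℚ) _ (MvPolynomial.X (Sum.inr (Sum.inl i)))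

noncomputable def zvar {m : ℕ} : RatField m :=
  algebraMap (MvPolynomial (Fin m ⊕ Fin m ⊕ Unit) ℚ) _ (MvPolynomial.X (Sum.inr (Sum.inr ())))

/-- `r_i = p_1 + ⋯ + p_i` (with `r_0 = 0`). -/
noncomputable def rsum {m : ℕ} (i : ℕ) : RatField m :=
  ∑ j : Fin m, if (j : ℕ) < i then pvar j else 0

lemma one_sub_mul_zvar_ne {m : ℕ} (f : MvPolynomial (Fin m ⊕ Fin m ⊕ Unit) ℚ) :
    (1 : RatField m) - algebraMap (MvPolynomial (Fin m ⊕ Fin m ⊕ Unit) ℚ) _ f * zvar ≠ 0 := by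
  have h : (1 : RatField m) - algebraMap (MvPolynomial (Fin m ⊕ Fin m ⊕ Unit) ℚ) _ f * zvar
      = algebraMap (MvPolynomial (Fin m ⊕ Fin m ⊕ Unit) ℚ) _
        (1 - f * MvPolynomial.X (Sum.inr (Sum.inr ()))) := by
    simp [zvar, map_sub, map_mul, map_one]
  rw [h]
  intro hz
  have h0 : (1 - f * MvPolynomial.X (Sum.inr (Sum.inr ())) :
      MvPolynomial (Fin m ⊕ Fin m ⊕ Unit) ℚ) = 0 :=
    IsFractionRing.to_map_eq_zero_iff.mp hz
  have := congrArg MvPolynomial.constantCoeff h0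
  simp [map_sub, map_mul] at this

lemma rsum_poly {m : ℕ} (k : ℕ) :
    rsum (m := m) k = algebraMap (MvPolynomial (Fin m ⊕ Fin m ⊕ Unit) ℚ) _
      (∑ j : Fin m, if (j : ℕ) < k then MvPolynomial.X (Sum.inl j) else 0) := by
  simp [rsum, pvar, map_sum, apply_ite
    (algebraMap (MvPolynomial (Fin m ⊕ Fin m ⊕ Unit) ℚ) (RatField m))]

lemma ne1 {m : ℕ} (k : ℕ) : (1 : RatField m) - rsum k * zvar ≠ 0 := by
  rw [rsum_poly]; exact one_sub_mul_zvar_ne _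

lemma ne2 {m : ℕ} (i : Fin m) (k : ℕ) :
    (1 : RatField m) - (qvar i + rsum k) * zvar ≠ 0 := by
  have h : qvar i + rsum (m := m) k
      = algebraMap (MvPolynomial (Fin m ⊕ Fin m ⊕ Unit) ℚ) _
        (MvPolynomial.X (Sum.inr (Sum.inl i)) +
          ∑ j : Fin m, if (j : ℕ) < k then MvPolynomial.X (Sum.inl j) else 0) := by
    rw [map_add, qvar, rsum_poly]
  rw [h]; exact one_sub_mul_zvar_ne _

lemma rsum_succ {m : ℕ} (i : Fin m) :
    rsum (m := m) ((i : ℕ) + 1) = rsum (i : ℕ) + pvar i := by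
  have key : ∀ j : Fin m, (if (j : ℕ) < (i : ℕ) + 1 then pvar j else 0)
      = (if (j : ℕ) < (i : ℕ) then pvar j else 0) + (if j = i then pvar j else 0) := by
    intro j
    by_cases h : j = i
    · subst h; simp
    · have hne : (j : ℕ) ≠ (i : ℕ) := fun hh => h (Fin.ext hh)
      by_cases h2 : (j : ℕ) < (i : ℕ)
      · have : (j : ℕ) < (i : ℕ) + 1 := by omega
        simp [h, h2, this]
      · have : ¬ (j : ℕ) < (i : ℕ) + 1 := by omega
        simp [h, h2, this]
  simp only [rsum, key, Finset.sum_add_distrib, Finset.sum_ite_eq', Finset.mem_univ, if_true]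

lemma rsum_zero {m : ℕ} : rsum (m := m) 0 = 0 := by
  simp [rsum]

/-- The rational function identity
`[(1 - r_m z) ∏_{i=1}^m (1 - (q_i + r_{i-1})z)] / [∏_{i=1}^m (1 - (q_i + r_i)z)]
 = ∏_{i=1}^m [1 + p_i q_i z² / ((1 - r_{i-1}z)(1 - (q_i + r_i)z))]`
(here the product index `i : Fin m` is 0-indexed, so `r_{i-1}` becomes
`rsum i` and `r_i` becomes `rsum (i+1)`). -/
theorem phi_product_identity (m : ℕ) (hm : 1 ≤ m) :
    ((1 - rsum (m := m) m * zvar) *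
        ∏ i : Fin m, (1 - (qvar i + rsum (i : ℕ)) * zvar)) /
        (∏ i : Fin m, (1 - (qvar i + rsum ((i : ℕ) + 1)) * zvar)) =
      ∏ i : Fin m,
        (1 + pvar i * qvar i * zvar ^ 2 /
          ((1 - rsum (m := m) (i : ℕ) * zvar) *
            (1 - (qvar i + rsum ((i : ℕ) + 1)) * zvar))) := by
  have hfac : ∀ i : Fin m,
      (1 + pvar i * qvar i * zvar ^ 2 /
        ((1 - rsum (m := m) (i : ℕ) * zvar) *
          (1 - (qvar i + rsum ((i : ℕ) + 1)) * zvar)))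
      = ((1 - rsum (m := m) ((i : ℕ) + 1) * zvar) * (1 - (qvar i + rsum (i : ℕ)) * zvar)) /
        ((1 - rsum (m := m) (i : ℕ) * zvar) * (1 - (qvar i + rsum ((i : ℕ) + 1)) * zvar)) := by
    intro i
    have h1 := ne1 (m := m) (i : ℕ)
    have h2 := ne2 i ((i : ℕ) + 1)
    rw [rsum_succ i] at h2 ⊢
    rw [eq_div_iff (mul_ne_zero h1 h2), add_mul, div_mul_cancel₀ _ (mul_ne_zero h1 h2)]
    ring
  rw [Finset.prod_congr rfl (fun i _ => hfac i), Finset.prod_div_distrib,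
    Finset.prod_mul_distrib, Finset.prod_mul_distrib]
  have htel : (∏ i : Fin m, (1 - rsum (m := m) ((i : ℕ) + 1) * zvar))
      = (1 - rsum (m := m) m * zvar) * ∏ i : Fin m, (1 - rsum (m := m) (i : ℕ) * zvar) := by
    rw [Fin.prod_univ_eq_prod_range (fun k => 1 - rsum (m := m) (k + 1) * zvar) m,
      Fin.prod_univ_eq_prod_range (fun k => 1 - rsum (m := m) k * zvar) m]
    have h1 := Finset.prod_range_succ' (fun k => (1 : RatField m) - rsum (m := m) k * zvar) m
    have h2 := Finset.prod_range_succ (fun k => (1 : RatField m) - rsum (m := m) k * zvar) m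
    rw [h2] at h1
    simpa [rsum_zero, mul_comm] using h1.symm
  rw [htel]
  have hC : (∏ i : Fin m, ((1 : RatField m) - rsum (m := m) (i : ℕ) * zvar)) ≠ 0 :=
    Finset.prod_ne_zero_iff.mpr fun i _ => ne1 _
  have hB : (∏ i : Fin m, ((1 : RatField m) - (qvar i + rsum ((i : ℕ) + 1)) * zvar)) ≠ 0 :=
    Finset.prod_ne_zero_iff.mpr fun i _ => ne2 i _
  rw [div_eq_div_iff hB (mul_ne_zero hC hB)]
  ring
end

section
/- Let \u03c6(z) be a formal power series with constant term 1 over a commutative ring containing \u211a, and let R(z) be determined by the Lagrange inversion setup: with w = w(z) the unique formal power series solution of w = z\u03c6(w), define R(z) by z/R(z) = w(z) (so R(z) = z/w(z)). Then for all k \u2265 2, the coefficient R_k = [z^{k-1}] (R(z)/z) satisfies R_k = -(1/(k-1)) [y^k] \u03c6(y)^{k-1}. -/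
/-- Composition `f(g)` of formal power series (intended for `g` with zero
constant term, in which case `coeff n (g^j) = 0` for `j > n` and the sum below
is the full sum `∑_j (coeff j f) · coeff n (g^j)`). -/
noncomputable def pscomp {A : Type*} [CommRing A] (f g : PowerSeries A) : PowerSeries A :=
  PowerSeries.mk fun n =>
    ∑ j ∈ Finset.range (n + 1), PowerSeries.coeff (R := A) j f * PowerSeries.coeff (R := A) n (g ^ j)

namespace LagrangeAux

open PowerSeries Finset

variable {A : Type*} [CommRing A]

lemma coeff_pscomp (f g : PowerSeries A) (n : ℕ) :
    coeff (R := A) n (pscomp f g) =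
      ∑ j ∈ range (n + 1), coeff (R := A) j f * coeff (R := A) n (g ^ j) := by
  simp [pscomp]

lemma coeff_pow_eq_zero {g : PowerSeries A} (hg : constantCoeff (R := A) g = 0)
    {n i : ℕ} (h : n < i) : coeff (R := A) n (g ^ i) = 0 := by
  obtain ⟨u, rfl⟩ := PowerSeries.X_dvd_iff.mpr hg
  rw [mul_pow, PowerSeries.coeff_X_pow_mul', if_neg (by omega)]

lemma coeff_aeval {g : PowerSeries A} (hg : constantCoeff (R := A) g = 0)
    (P : Polynomial A) (n : ℕ) :
    coeff (R := A) n (Polynomial.aeval g P) =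
      ∑ j ∈ range (n + 1), P.coeff j * coeff (R := A) n (g ^ j) := by
  rw [Polynomial.aeval_eq_sum_range' (n := max (n + 1) (P.natDegree + 1)) (by omega) g,
    map_sum]
  simp_rw [LinearMap.map_smul, smul_eq_mul]
  symm
  apply Finset.sum_subset (Finset.range_subset_range.mpr (by omega))
  intro i hi hni
  simp only [mem_range] at hi hni
  rw [coeff_pow_eq_zero hg (by omega), mul_zero]

lemma coeff_pscomp_trunc {g : PowerSeries A} (hg : constantCoeff (R := A) g = 0)
    (f : PowerSeries A) {n N : ℕ} (hn : n < N) :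
    coeff (R := A) n (pscomp f g) = coeff (R := A) n (Polynomial.aeval g (trunc N f)) := by
  rw [coeff_aeval hg, coeff_pscomp]
  refine Finset.sum_congr rfl fun j hj => ?_
  simp only [mem_range] at hj
  rw [PowerSeries.coeff_trunc, if_pos (by omega)]

lemma pscomp_mul {g : PowerSeries A} (hg : constantCoeff (R := A) g = 0) (f h : PowerSeries A) :
    pscomp (f * h) g = pscomp f g * pscomp h g := by
  ext n
  rw [coeff_pscomp_trunc hg (f * h) (Nat.lt_succ_self n)]
  have key : coeff (R := A) n (Polynomial.aeval g (trunc (n + 1) (f * h)))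
      = coeff (R := A) n (Polynomial.aeval g (trunc (n + 1) f * trunc (n + 1) h)) := by
    rw [coeff_aeval hg, coeff_aeval hg]
    refine Finset.sum_congr rfl fun j hj => ?_
    simp only [mem_range] at hj
    congr 1
    rw [PowerSeries.coeff_trunc, if_pos (by omega), Polynomial.coeff_mul,
      PowerSeries.coeff_mul]
    refine Finset.sum_congr rfl fun p hp => ?_
    rw [Finset.HasAntidiagonal.mem_antidiagonal] at hp
    rw [PowerSeries.coeff_trunc, PowerSeries.coeff_trunc, if_pos (by omega),
      if_pos (by omega)]
  rw [key, map_mul, PowerSeries.coeff_mul, PowerSeries.coeff_mul]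
  refine Finset.sum_congr rfl fun p hp => ?_
  rw [Finset.HasAntidiagonal.mem_antidiagonal] at hp
  rw [← coeff_pscomp_trunc hg f (show p.1 < n + 1 by omega),
    ← coeff_pscomp_trunc hg h (show p.2 < n + 1 by omega)]

lemma pscomp_one (g : PowerSeries A) : pscomp 1 g = 1 := by
  ext n
  rw [coeff_pscomp, Finset.sum_eq_single 0]
  · simp
  · intro j _ hj
    rw [PowerSeries.coeff_one, if_neg hj, zero_mul]
  · intro h
    exact absurd (Finset.mem_range.mpr (Nat.succ_pos n)) h

lemma pscomp_X {g : PowerSeries A} (hg : constantCoeff (R := A) g = 0) :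
    pscomp PowerSeries.X g = g := by
  ext n
  rw [coeff_pscomp]
  rcases Nat.eq_zero_or_pos n with rfl | hn
  · rw [Finset.sum_range_one, pow_zero]
    simp [PowerSeries.coeff_zero_eq_constantCoeff_apply, hg]
  · rw [Finset.sum_eq_single 1]
    · simp [PowerSeries.coeff_X]
    · intro j _ hj
      rw [PowerSeries.coeff_X, if_neg hj, zero_mul]
    · intro h
      exact absurd (Finset.mem_range.mpr (by omega)) h

lemma pscomp_X_right (f : PowerSeries A) : pscomp f PowerSeries.X = f := by
  ext n
  rw [coeff_pscomp, Finset.sum_eq_single n]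
  · rw [PowerSeries.coeff_X_pow, if_pos rfl, mul_one]
  · intro j _ hj
    rw [PowerSeries.coeff_X_pow, if_neg (by omega), mul_zero]
  · intro h
    exact absurd (Finset.mem_range.mpr (by omega)) h

lemma pscomp_pow {g h : PowerSeries A} (hh : constantCoeff (R := A) h = 0) (j : ℕ) :
    pscomp (g ^ j) h = pscomp g h ^ j := by
  induction j with
  | zero => simpa using pscomp_one h
  | succ j ih => rw [pow_succ, pow_succ, pscomp_mul hh, ih]

lemma pscomp_assoc (f : PowerSeries A) {g h : PowerSeries A}
    (hg : constantCoeff (R := A) g = 0) (hh : constantCoeff (R := A) h = 0) :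
    pscomp (pscomp f g) h = pscomp f (pscomp g h) := by
  ext n
  rw [coeff_pscomp, coeff_pscomp]
  have hr : ∀ j ∈ range (n + 1), coeff (R := A) j f * coeff (R := A) n (pscomp g h ^ j)
      = ∑ m ∈ range (n + 1), coeff (R := A) j f * (coeff (R := A) m (g ^ j) * coeff (R := A) n (h ^ m)) := by
    intro j _
    rw [← pscomp_pow hh, coeff_pscomp, Finset.mul_sum]
  rw [Finset.sum_congr rfl hr, Finset.sum_comm]
  refine Finset.sum_congr rfl fun m hm => ?_
  simp only [mem_range] at hm
  rw [coeff_pscomp, Finset.sum_mul,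
    Finset.sum_subset (Finset.range_subset_range.mpr (show m + 1 ≤ n + 1 by omega))]
  · exact Finset.sum_congr rfl fun j _ => by ring
  · intro j hj hjm
    simp only [mem_range] at hj hjm
    simp [coeff_pow_eq_zero hg (show m < j by omega)]

lemma coeff_self_pow {w : PowerSeries A} (hw0 : constantCoeff (R := A) w = 0)
    (hw1 : coeff (R := A) 1 w = 1) (d : ℕ) : coeff (R := A) d (w ^ d) = 1 := by
  obtain ⟨u, rfl⟩ := PowerSeries.X_dvd_iff.mpr hw0
  have hu : constantCoeff (R := A) u = 1 := by
    rwa [PowerSeries.coeff_succ_X_mul, PowerSeries.coeff_zero_eq_constantCoeff_apply] at hw1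
  rw [mul_pow, PowerSeries.coeff_X_pow_mul', if_pos le_rfl, Nat.sub_self,
    PowerSeries.coeff_zero_eq_constantCoeff_apply, map_pow, hu, one_pow]

lemma pscomp_injective {w : PowerSeries A} (hw0 : constantCoeff (R := A) w = 0)
    (hw1 : coeff (R := A) 1 w = 1) {f h : PowerSeries A}
    (hfh : pscomp f w = pscomp h w) : f = h := by
  ext d
  induction d using Nat.strong_induction_on with
  | _ d ih =>
    have hc := congrArg (coeff (R := A) d) hfh
    rw [coeff_pscomp, coeff_pscomp, Finset.sum_range_succ, Finset.sum_range_succ,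
      Finset.sum_congr rfl (fun j hj => by
        rw [ih j (Finset.mem_range.mp hj)] : ∀ j ∈ range d,
          coeff (R := A) j f * coeff (R := A) d (w ^ j) = coeff (R := A) j h * coeff (R := A) d (w ^ j)),
      coeff_self_pow hw0 hw1, mul_one, mul_one] at hc
    exact add_left_cancel hc

lemma coeff_deriv_pscomp_mul {g : PowerSeries A} (hg : constantCoeff (R := A) g = 0)
    (f B : PowerSeries A) (n : ℕ) :
    coeff (R := A) n (PowerSeries.derivative A (pscomp f g) * B) =
      ∑ d ∈ range (n + 2), coeff (R := A) d f *
        coeff (R := A) n (PowerSeries.derivative A (g ^ d) * B) := by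
  have step1 : ∀ pq ∈ Finset.HasAntidiagonal.antidiagonal n,
      coeff (R := A) pq.1 (PowerSeries.derivative A (pscomp f g)) * coeff (R := A) pq.2 B =
      ∑ d ∈ range (n + 2), coeff (R := A) d f *
        (coeff (R := A) pq.1 (PowerSeries.derivative A (g ^ d)) * coeff (R := A) pq.2 B) := by
    intro pq hpq
    rw [Finset.HasAntidiagonal.mem_antidiagonal] at hpq
    rw [PowerSeries.coeff_derivative, coeff_pscomp,
      Finset.sum_subset (Finset.range_subset_range.mpr (show pq.1 + 2 ≤ n + 2 by omega))
        (fun d hd hd2 => by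
          simp only [mem_range] at hd hd2
          rw [coeff_pow_eq_zero hg (by omega), mul_zero]),
      Finset.sum_mul, Finset.sum_mul]
    refine Finset.sum_congr rfl fun d _ => ?_
    rw [PowerSeries.coeff_derivative]
    ring
  rw [PowerSeries.coeff_mul, Finset.sum_congr rfl step1, Finset.sum_comm]
  refine Finset.sum_congr rfl fun d _ => ?_
  rw [PowerSeries.coeff_mul, Finset.mul_sum]

lemma nsmul_cancel [Algebra ℚ A] {r : ℕ} (hr : 0 < r) {a b : A}
    (h : r • a = r • b) : a = b := by
  have h1 : ((r : ℚ)) • a = ((r : ℚ)) • b := by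
    rw [Nat.cast_smul_eq_nsmul, Nat.cast_smul_eq_nsmul]; exact h
  have h2 := congrArg (fun x => ((r : ℚ))⁻¹ • x) h1
  simpa [smul_smul, inv_mul_cancel₀ (show (r : ℚ) ≠ 0 by exact_mod_cast hr.ne')] using h2

lemma deriv_pow_coeff (φ : PowerSeries A) (m n : ℕ) :
    (m + 1) • coeff (R := A) n (φ ^ m * PowerSeries.derivative A φ) =
      (n + 1) • coeff (R := A) (n + 1) (φ ^ (m + 1)) := by
  have h : PowerSeries.derivative A (φ ^ (m + 1)) =
      (m + 1) • (φ ^ m * PowerSeries.derivative A φ) := by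
    rw [Derivation.leibniz_pow]
    simp [smul_eq_mul, Nat.add_sub_cancel]
  calc (m + 1) • coeff (R := A) n (φ ^ m * PowerSeries.derivative A φ)
      = coeff (R := A) n ((m + 1) • (φ ^ m * PowerSeries.derivative A φ)) := by
        rw [map_nsmul]
    _ = coeff (R := A) n (PowerSeries.derivative A (φ ^ (m + 1))) := by rw [h]
    _ = coeff (R := A) (n + 1) (φ ^ (m + 1)) * (n + 1) := PowerSeries.coeff_derivative _ _
    _ = (n + 1) • coeff (R := A) (n + 1) (φ ^ (m + 1)) := by
        rw [nsmul_eq_mul]; push_cast; ring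

end LagrangeAux

open PowerSeries Finset LagrangeAux in
/-- **Lagrange inversion for the free cumulant series.**
Let `φ` be a power series with constant term `1`, `w` the solution of
`w = z φ(w)`, and `R` determined by `z / R(z) = w(z)`, i.e. `R·w = z`
(so `R_k = [z^{k-1}](R(z)/z) = [z^k] R(z)`). Then for `k ≥ 2`,
`R_k = -(1/(k-1)) [y^k] φ(y)^{k-1}`. -/
theorem lagrange_free_cumulant {A : Type*} [CommRing A] [Algebra ℚ A]
    (φ w R : PowerSeries A)
    (hφ0 : PowerSeries.constantCoeff (R := A) φ = 1)
    (hw0 : PowerSeries.constantCoeff (R := A) w = 0)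
    (hw : w = PowerSeries.X * pscomp φ w)
    (hR : R * w = PowerSeries.X)
    (k : ℕ) (hk : 2 ≤ k) :
    PowerSeries.coeff (R := A) k R =
      (-(1 / ((k : ℚ) - 1))) • PowerSeries.coeff (R := A) k (φ ^ (k - 1)) := by
  classical
  set D := PowerSeries.derivative A with hD
  have hXinj : ∀ a b : PowerSeries A, X * a = X * b → a = b := by
    intro a b hab
    ext n
    have := congrArg (coeff (R := A) (n + 1)) hab
    rwa [coeff_succ_X_mul, coeff_succ_X_mul] at this
  set S := pscomp φ w with hS
  have hRS : R * S = 1 := by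
    apply hXinj
    rw [mul_one]
    calc X * (R * S) = R * (X * S) := by ring
      _ = R * w := by rw [← hw]
      _ = X := hR
  have hS0 : constantCoeff (R := A) S = 1 := by
    rw [hS, ← PowerSeries.coeff_zero_eq_constantCoeff_apply, coeff_pscomp,
      Finset.sum_range_one, pow_zero, PowerSeries.coeff_zero_eq_constantCoeff_apply,
      PowerSeries.coeff_zero_eq_constantCoeff_apply, hφ0, map_one, mul_one]
  have hw1 : coeff (R := A) 1 w = 1 := by
    rw [hw, coeff_succ_X_mul, PowerSeries.coeff_zero_eq_constantCoeff_apply]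
    exact hS0
  set ψ := PowerSeries.invOfUnit φ 1 with hψdef
  have hφψ : φ * ψ = 1 := PowerSeries.mul_invOfUnit φ 1 (by simp [hφ0])
  have hRψ : R = pscomp ψ w := by
    have h1 : pscomp ψ w * S = 1 := by
      rw [hS, ← pscomp_mul hw0, mul_comm ψ φ, hφψ, pscomp_one]
    calc R = R * (pscomp ψ w * S) := by rw [h1, mul_one]
      _ = R * S * pscomp ψ w := by ring
      _ = pscomp ψ w := by rw [hRS, one_mul]
  set g := (X : PowerSeries A) * ψ with hgdef
  have hg0 : constantCoeff (R := A) g = 0 := by simp [hgdef]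
  have hgw : pscomp g w = X := by
    rw [hgdef, pscomp_mul hw0, pscomp_X hw0, ← hRψ, mul_comm, hR]
  have hwg : pscomp w g = X := by
    apply pscomp_injective hw0 hw1
    rw [pscomp_assoc w hg0 hw0, hgw, pscomp_X_right, pscomp_X hw0]
  have hψR : ψ = pscomp R g := by
    calc ψ = pscomp ψ X := (pscomp_X_right ψ).symm
      _ = pscomp ψ (pscomp w g) := by rw [hwg]
      _ = pscomp (pscomp ψ w) g := (pscomp_assoc ψ hw0 hg0).symm
      _ = pscomp R g := by rw [← hRψ]
  have hψ' : D ψ = -(ψ ^ 2 * D φ) := by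
    have h0 : φ * D ψ + ψ * D φ = 0 := by
      have h1 := congrArg D hφψ
      rw [Derivation.leibniz, Derivation.map_one_eq_zero, smul_eq_mul, smul_eq_mul] at h1
      linear_combination h1
    calc D ψ = φ * ψ * D ψ := by rw [hφψ, one_mul]
      _ = ψ * (φ * D ψ) := by ring
      _ = ψ * (-(ψ * D φ)) := by
          rw [show φ * D ψ = -(ψ * D φ) from by linear_combination h0]
      _ = -(ψ ^ 2 * D φ) := by ring
  have hpack : ∀ d, d ≤ k → ψ ^ d * φ ^ k = φ ^ (k - d) := by
    intro d hd
    have h1 : φ ^ k = φ ^ (k - d) * φ ^ d := by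
      rw [← pow_add]; congr 1; omega
    calc ψ ^ d * φ ^ k = φ ^ (k - d) * (φ * ψ) ^ d := by rw [h1, mul_pow]; ring
      _ = φ ^ (k - d) := by rw [hφψ, one_pow, mul_one]
  have hT : ∀ d, 1 ≤ d → d ≤ k →
      coeff (R := A) (k - 1) (D (g ^ d) * φ ^ k) =
        d • coeff (R := A) (k - d) (φ ^ (k - d) + X * (-(ψ ^ (d + 1) * D φ * φ ^ k))) := by
    intro d hd1 hdk
    have hgd : D g = X * D ψ + ψ := by
      rw [hgdef]
      rw [show D (X * ψ) = X • D ψ + ψ • D X from Derivation.leibniz D X ψ]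
      simp [hD, smul_eq_mul]
    have hsplit : g ^ (d - 1) * D g * φ ^ k =
        X ^ (d - 1) * (φ ^ (k - d) + X * (-(ψ ^ (d + 1) * D φ * φ ^ k))) := by
      have hgp : g ^ (d - 1) = X ^ (d - 1) * ψ ^ (d - 1) := by
        rw [hgdef, mul_pow]
      rw [hgp, hgd, hψ']
      have e1 : ψ ^ (d - 1) * ψ = ψ ^ d := by
        rw [← pow_succ]; congr 1; omega
      have e2 : ψ ^ (d - 1) * ψ ^ 2 = ψ ^ (d + 1) := by
        rw [← pow_add]; congr 1; omega
      calc X ^ (d - 1) * ψ ^ (d - 1) * (X * -(ψ ^ 2 * D φ) + ψ) * φ ^ k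
          = X ^ (d - 1) * ((ψ ^ (d - 1) * ψ) * φ ^ k
              + X * (-((ψ ^ (d - 1) * ψ ^ 2) * D φ * φ ^ k))) := by ring
        _ = X ^ (d - 1) * (φ ^ (k - d) + X * (-(ψ ^ (d + 1) * D φ * φ ^ k))) := by
            rw [e1, e2, hpack d hdk]
    have hDgd : D (g ^ d) = d • (g ^ (d - 1) * D g) := by
      rw [Derivation.leibniz_pow]
      simp [smul_eq_mul]
    rw [hDgd, smul_mul_assoc, map_nsmul, hsplit,
      show k - 1 = (k - d) + (d - 1) by omega, PowerSeries.coeff_X_pow_mul]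
  -- evaluate: zero for 1 ≤ d < k
  have hE0 : ∀ d ∈ range (k + 1), d ≠ k →
      coeff (R := A) d R * coeff (R := A) (k - 1) (D (g ^ d) * φ ^ k) = 0 := by
    intro d hd hdk
    simp only [mem_range] at hd
    rcases Nat.eq_zero_or_pos d with rfl | hd1
    · simp [Derivation.map_one_eq_zero]
    · have hdklt : d < k := by omega
      obtain ⟨r, hr⟩ : ∃ r, k - d = r + 1 := ⟨k - d - 1, by omega⟩
      rw [hT d hd1 (by omega)]
      have hp : ψ ^ (d + 1) * D φ * φ ^ k = φ ^ r * D φ := by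
        rw [show ψ ^ (d + 1) * D φ * φ ^ k = ψ ^ (d + 1) * φ ^ k * D φ by ring,
          hpack (d + 1) (by omega), show k - (d + 1) = r by omega]
      have hdp := deriv_pow_coeff φ r r
      have hcc : coeff (R := A) r (φ ^ r * D φ) = coeff (R := A) (r + 1) (φ ^ (r + 1)) :=
        nsmul_cancel (r := r + 1) (by omega) hdp
      have hcz : coeff (R := A) (k - d) (φ ^ (k - d) + X * (-(ψ ^ (d + 1) * D φ * φ ^ k))) = 0 := by
        rw [hr, map_add, coeff_succ_X_mul, map_neg, hp, hcc]
        ring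
      rw [hcz, smul_zero, mul_zero]
  -- the d = k term
  have hEk : coeff (R := A) (k - 1) (D (g ^ k) * φ ^ k) = (k : A) := by
    rw [hT k (by omega) le_rfl, Nat.sub_self]
    have h1 : coeff (R := A) 0 (φ ^ 0 + X * (-(ψ ^ (k + 1) * D φ * φ ^ k))) = 1 := by
      rw [map_add, pow_zero, PowerSeries.coeff_zero_eq_constantCoeff_apply,
        PowerSeries.coeff_zero_eq_constantCoeff_apply]
      simp [map_mul]
    rw [h1, nsmul_eq_mul, mul_one]
  -- main identity
  have hsum := coeff_deriv_pscomp_mul hg0 R (φ ^ k) (k - 1)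
  rw [show k - 1 + 2 = k + 1 by omega] at hsum
  rw [← hD] at hsum
  have hmain : coeff (R := A) (k - 1) (D ψ * φ ^ k) = coeff (R := A) k R * (k : A) := by
    rw [hψR, hsum, Finset.sum_eq_single k (fun d hd hdk => hE0 d hd hdk)
      (fun hcon => absurd (Finset.mem_range.mpr (by omega)) hcon), hEk]
  -- second evaluation of the same coefficient
  have hDψ : D ψ * φ ^ k = -(φ ^ (k - 2) * D φ) := by
    rw [hψ']
    have h2 : ψ ^ 2 * D φ * φ ^ k = φ ^ (k - 2) * D φ := by
      rw [show ψ ^ 2 * D φ * φ ^ k = ψ ^ 2 * φ ^ k * D φ by ring, hpack 2 hk]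
    calc -(ψ ^ 2 * D φ) * φ ^ k = -(ψ ^ 2 * D φ * φ ^ k) := by ring
      _ = -(φ ^ (k - 2) * D φ) := by rw [h2]
  have hc2 := deriv_pow_coeff φ (k - 2) (k - 1)
  rw [show k - 2 + 1 = k - 1 by omega, show k - 1 + 1 = k by omega] at hc2
  set t := coeff (R := A) k (φ ^ (k - 1)) with ht
  set c := coeff (R := A) (k - 1) (φ ^ (k - 2) * D φ) with hcdef
  have e1 : (k : ℚ) • coeff (R := A) k R = -c := by
    have h2 : coeff (R := A) k R * (k : A) = -c := by
      rw [← hmain, hDψ, map_neg, hcdef]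
    rw [Nat.cast_smul_eq_nsmul, nsmul_eq_mul, mul_comm]
    exact h2
  have hk1Q : (k : ℚ) - 1 ≠ 0 := by
    have h3 : (2 : ℚ) ≤ (k : ℚ) := by exact_mod_cast hk
    linarith
  have hkQ : (k : ℚ) ≠ 0 := by
    have h3 : (2 : ℚ) ≤ (k : ℚ) := by exact_mod_cast hk
    linarith
  have e2 : ((k : ℚ) - 1) • c = (k : ℚ) • t := by
    have h1 : ((k - 1 : ℕ) : ℚ) • c = ((k : ℕ) : ℚ) • t := by
      rw [Nat.cast_smul_eq_nsmul, Nat.cast_smul_eq_nsmul]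
      exact hc2
    rwa [show ((k - 1 : ℕ) : ℚ) = (k : ℚ) - 1 by
      rw [Nat.cast_sub (by omega : 1 ≤ k)]; norm_num] at h1
  have s1 : coeff (R := A) k R = ((k : ℚ))⁻¹ • ((k : ℚ) • coeff (R := A) k R) := by
    rw [smul_smul, inv_mul_cancel₀ hkQ, one_smul]
  have s3 : c = (((k : ℚ) - 1)⁻¹ * (k : ℚ)) • t := by
    rw [← smul_smul, ← e2, smul_smul, inv_mul_cancel₀ hk1Q, one_smul]
  rw [s1, e1, s3, smul_neg, smul_smul,
    show ((k : ℚ))⁻¹ * (((k : ℚ) - 1)⁻¹ * (k : ℚ)) = 1 / ((k : ℚ) - 1) by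
      field_simp,
    ← neg_smul]
end
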